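/- Let n = 3^s·t where s ≥ 1, t > 1 and 3 ∤ t, and let β = σ^{−1} ρ_{(01)} σ ∈ Sym([3n]). Then for every x ∈ [3n]: β(x) = x + 1 if x_0·t + X ≡ 0 (mod 3); β(x) = x − 1 if x_0·t + X ≡ 1 (mod 3); and β(x) = x if x_0·t + X ≡ 2 (mod 3). -/

import Mathlib

lemma shuffleAux.div_lt (k n : ℕ) (x : Fin (k * n)) : (x : ℕ) / n < k := by
  have hx := x.isLt
  have hn : 0 < n := by
    rcases Nat.eq_zero_or_pos n with rfl | h
    · simp at hx
    · exact h
  exact (Nat.div_lt_iff_lt_mul hn).mpr hx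

lemma shuffleAux.mod_lt (k n : ℕ) (x : Fin (k * n)) : (x : ℕ) % n < n := by
  have hx := x.isLt
  have hn : 0 < n := by
    rcases Nat.eq_zero_or_pos n with rfl | h
    · simp at hx
    · exact h
  exact Nat.mod_lt _ hn

lemma shuffleAux.bound1 (k n : ℕ) (x : Fin (k * n)) :
    k * ((x : ℕ) % n) + (x : ℕ) / n < k * n := by
  have h1 := shuffleAux.mod_lt k n x
  have h2 := shuffleAux.div_lt k n x
  calc k * ((x : ℕ) % n) + (x : ℕ) / n
      < k * ((x : ℕ) % n) + k := by omega
    _ = k * ((x : ℕ) % n + 1) := by ring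
    _ ≤ k * n := Nat.mul_le_mul_left _ (by omega)

lemma shuffleAux.bound2 (k n : ℕ) (x : Fin (k * n)) (j : Fin k) :
    (x : ℕ) % n + (j : ℕ) * n < k * n := by
  have h1 := shuffleAux.mod_lt k n x
  have h2 := j.isLt
  calc (x : ℕ) % n + (j : ℕ) * n
      < n + (j : ℕ) * n := by omega
    _ = ((j : ℕ) + 1) * n := by ring
    _ ≤ k * n := Nat.mul_le_mul_right _ (by omega)

/-- The standard shuffle `σ` on a deck of `k * n` cards, where the card in position
`i + j·n` (`i ∈ [n]`, `j ∈ [k]`) is sent to position `k·i + j`; equivalently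
`σ(x) = k·(x mod n) + ⌊x / n⌋`. -/
noncomputable def stdShuffle (k n : ℕ) : Equiv.Perm (Fin (k * n)) :=
  Equiv.ofBijective
    (fun x => ⟨k * ((x : ℕ) % n) + (x : ℕ) / n, shuffleAux.bound1 k n x⟩)
    (Finite.injective_iff_bijective.mp (by
      intro x y hxy
      simp only [Fin.mk.injEq] at hxy
      have hk : 0 < k := lt_of_le_of_lt (Nat.zero_le _) (shuffleAux.div_lt k n x)
      have key : ∀ z : Fin (k * n),
          (k * ((z : ℕ) % n) + (z : ℕ) / n) % k = (z : ℕ) / n ∧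
          (k * ((z : ℕ) % n) + (z : ℕ) / n) / k = (z : ℕ) % n := by
        intro z
        have hz := shuffleAux.div_lt k n z
        constructor
        · rw [Nat.mul_add_mod, Nat.mod_eq_of_lt hz]
        · rw [Nat.mul_add_div hk, Nat.div_eq_of_lt hz, Nat.add_zero]
      obtain ⟨h1x, h2x⟩ := key x
      obtain ⟨h1y, h2y⟩ := key y
      rw [hxy] at h1x h2x
      have hd : (x : ℕ) / n = (y : ℕ) / n := by omega
      have hm : (x : ℕ) % n = (y : ℕ) % n := by omega
      apply Fin.ext
      rw [← Nat.div_add_mod (x : ℕ) n, ← Nat.div_add_mod (y : ℕ) n, hd, hm]))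

/-- The permutation `ρ_τ` induced by a permutation `τ` of the `k` piles:
`ρ_τ(i + j·n) = i + τ(j)·n` for `i ∈ [n]`, `j ∈ [k]`. -/
noncomputable def pilePerm (k n : ℕ) (τ : Equiv.Perm (Fin k)) : Equiv.Perm (Fin (k * n)) :=
  Equiv.ofBijective
    (fun x => ⟨(x : ℕ) % n + ((τ ⟨(x : ℕ) / n, shuffleAux.div_lt k n x⟩ : Fin k) : ℕ) * n,
      shuffleAux.bound2 k n x _⟩)
    (Finite.injective_iff_bijective.mp (by
      intro x y hxy
      simp only [Fin.mk.injEq] at hxy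
      have hn : 0 < n := lt_of_le_of_lt (Nat.zero_le _) (shuffleAux.mod_lt k n x)
      have key : ∀ z : Fin (k * n),
          ((z : ℕ) % n + ((τ ⟨(z : ℕ) / n, shuffleAux.div_lt k n z⟩ : Fin k) : ℕ) * n) % n
            = (z : ℕ) % n ∧
          ((z : ℕ) % n + ((τ ⟨(z : ℕ) / n, shuffleAux.div_lt k n z⟩ : Fin k) : ℕ) * n) / n
            = ((τ ⟨(z : ℕ) / n, shuffleAux.div_lt k n z⟩ : Fin k) : ℕ) := by
        intro z
        have h1 := shuffleAux.mod_lt k n z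
        constructor
        · rw [Nat.add_mul_mod_self_right, Nat.mod_eq_of_lt h1]
        · rw [Nat.add_mul_div_right _ _ hn, Nat.div_eq_of_lt h1, Nat.zero_add]
      obtain ⟨h1x, h2x⟩ := key x
      obtain ⟨h1y, h2y⟩ := key y
      rw [hxy] at h1x h2x
      have hm : (x : ℕ) % n = (y : ℕ) % n := by omega
      have hv : ((τ ⟨(x : ℕ) / n, shuffleAux.div_lt k n x⟩ : Fin k) : ℕ)
          = ((τ ⟨(y : ℕ) / n, shuffleAux.div_lt k n y⟩ : Fin k) : ℕ) := by omega
      have hτ : (⟨(x : ℕ) / n, shuffleAux.div_lt k n x⟩ : Fin k)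
          = ⟨(y : ℕ) / n, shuffleAux.div_lt k n y⟩ := τ.injective (Fin.ext hv)
      have hd : (x : ℕ) / n = (y : ℕ) / n := congrArg Fin.val hτ
      apply Fin.ext
      rw [← Nat.div_add_mod (x : ℕ) n, ← Nat.div_add_mod (y : ℕ) n, hd, hm]))

/-- The shuffle group `G_{k,kn}`, generated by the standard shuffle `σ` together with
the pile permutations `ρ_τ` for all `τ ∈ Sym([k])`. -/
noncomputable def shuffleGroup (k n : ℕ) : Subgroup (Equiv.Perm (Fin (k * n))) :=
  Subgroup.closure ({stdShuffle k n} ∪ Set.range (pilePerm k n))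

/-- For `x ∈ [3n]` with `n = 3^s·t`, the `i`-th base-3 digit `x_i` of `⌊x/t⌋`. -/
def digit (t x i : ℕ) : ℕ := (x / t / 3 ^ i) % 3

lemma digit_lt (t x i : ℕ) : digit t x i < 3 := Nat.mod_lt _ (by omega)

/-- `T(x) = |{i ∈ {0,...,s} : x_i = 2}|`, the number of base-3 digits of `⌊x/t⌋`
(among positions `0,...,s`) equal to `2`. -/
def twoCount (s t x : ℕ) : ℕ :=
  ((Finset.range (s + 1)).filter (fun i => digit t x i = 2)).card

/-- The action of `β = σ^{-1} ρ_{(01)} σ` of the paper (acting on the right, i.e.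
applying `σ^{-1}` first, then `ρ_{(01)}`, then `σ`). -/
lemma beta_val (n : ℕ) (hn : 0 < n) (x : Fin (3 * n)) :
    (((stdShuffle 3 n * pilePerm 3 n (Equiv.swap 0 1) * (stdShuffle 3 n)⁻¹) x : Fin (3 * n)) : ℕ)
      = 3 * ((x : ℕ) / 3) +
        (if (x : ℕ) % 3 = 0 then 1 else if (x : ℕ) % 3 = 1 then 0 else 2) := by
  have hx := x.isLt
  have hdivn : (x : ℕ) / 3 < n := by omega
  have hm3 : (x : ℕ) % 3 < 3 := by omega
  have hyb : (x : ℕ) / 3 + ((x : ℕ) % 3) * n < 3 * n := by nlinarith [hm3, hdivn]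
  set y : Fin (3 * n) := ⟨(x : ℕ) / 3 + ((x : ℕ) % 3) * n, hyb⟩ with hy
  have hymod : ((y : ℕ)) % n = (x : ℕ) / 3 := by
    rw [hy]; simp [Nat.add_mul_mod_self_right, Nat.mod_eq_of_lt hdivn]
  have hydiv : ((y : ℕ)) / n = (x : ℕ) % 3 := by
    rw [hy]; simp [Nat.add_mul_div_right _ _ hn, Nat.div_eq_of_lt hdivn]
  have hσy : stdShuffle 3 n y = x := by
    apply Fin.ext
    show 3 * ((y : ℕ) % n) + (y : ℕ) / n = (x : ℕ)
    rw [hymod, hydiv]; omega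
  have hinv : (stdShuffle 3 n)⁻¹ x = y := by rw [← hσy, Equiv.Perm.inv_def, Equiv.symm_apply_apply]
  have step : (stdShuffle 3 n * pilePerm 3 n (Equiv.swap 0 1) * (stdShuffle 3 n)⁻¹) x
      = stdShuffle 3 n (pilePerm 3 n (Equiv.swap 0 1) y) := by
    simp [Equiv.Perm.mul_apply, hinv]
  rw [step]
  set j : Fin 3 := ⟨(x : ℕ) % 3, hm3⟩ with hj
  set τ : Fin 3 := (Equiv.swap 0 1 : Equiv.Perm (Fin 3)) j with hτ
  have hρ : pilePerm 3 n (Equiv.swap 0 1) y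
      = ⟨(x : ℕ) / 3 + (τ : ℕ) * n, by nlinarith [hdivn, τ.isLt]⟩ := by
    apply Fin.ext
    show (y : ℕ) % n + (((Equiv.swap 0 1 : Equiv.Perm (Fin 3))
        ⟨(y : ℕ) / n, shuffleAux.div_lt 3 n y⟩ : Fin 3) : ℕ) * n
        = (x : ℕ) / 3 + (τ : ℕ) * n
    have hjj : (⟨(y : ℕ) / n, shuffleAux.div_lt 3 n y⟩ : Fin 3) = j := Fin.ext hydiv
    rw [hymod, hjj, ← hτ]
  rw [hρ]
  have hmain : (stdShuffle 3 n (⟨(x : ℕ) / 3 + (τ : ℕ) * n,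
      by nlinarith [hdivn, τ.isLt]⟩ : Fin (3 * n)) : ℕ) = 3 * ((x : ℕ) / 3) + (τ : ℕ) := by
    show 3 * (((x : ℕ) / 3 + (τ : ℕ) * n) % n) + ((x : ℕ) / 3 + (τ : ℕ) * n) / n
        = 3 * ((x : ℕ) / 3) + (τ : ℕ)
    rw [Nat.add_mul_mod_self_right, Nat.mod_eq_of_lt hdivn,
        Nat.add_mul_div_right _ _ hn, Nat.div_eq_of_lt hdivn, Nat.zero_add]
  rw [hmain]
  have hswap : ∀ k : Fin 3, (((Equiv.swap 0 1 : Equiv.Perm (Fin 3)) k : Fin 3) : ℕ)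
      = if (k : ℕ) % 3 = 0 then 1 else if (k : ℕ) % 3 = 1 then 0 else 2 := by decide
  have hjval : (j : ℕ) = (x : ℕ) % 3 := rfl
  have hmm : (x : ℕ) % 3 % 3 = (x : ℕ) % 3 := Nat.mod_mod_of_dvd _ dvd_rfl
  rw [hτ, hswap j, hjval, hmm]

theorem beta_action (s t n : ℕ) (hs : 1 ≤ s) (ht : 1 < t) (h3t : ¬ 3 ∣ t) (hn : n = 3 ^ s * t) :
    ∀ x : Fin (3 * n),
      ((digit t (x : ℕ) 0 * t + (x : ℕ) % t) % 3 = 0 →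
        (((stdShuffle 3 n * pilePerm 3 n (Equiv.swap 0 1) * (stdShuffle 3 n)⁻¹) x : ℕ) : ℤ) =
          ((x : ℕ) : ℤ) + 1) ∧
      ((digit t (x : ℕ) 0 * t + (x : ℕ) % t) % 3 = 1 →
        (((stdShuffle 3 n * pilePerm 3 n (Equiv.swap 0 1) * (stdShuffle 3 n)⁻¹) x : ℕ) : ℤ) =
          ((x : ℕ) : ℤ) - 1) ∧
      ((digit t (x : ℕ) 0 * t + (x : ℕ) % t) % 3 = 2 →
        (((stdShuffle 3 n * pilePerm 3 n (Equiv.swap 0 1) * (stdShuffle 3 n)⁻¹) x : ℕ) : ℤ) =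
          ((x : ℕ) : ℤ)) := by
  have hn0 : 0 < n := by subst hn; positivity
  intro x
  have hval := beta_val n hn0 x
  have hcong : (digit t (x : ℕ) 0 * t + (x : ℕ) % t) % 3 = (x : ℕ) % 3 := by
    have h1 : t * ((x : ℕ) / t) + (x : ℕ) % t = (x : ℕ) := Nat.div_add_mod _ _
    have h2 : 3 * ((x : ℕ) / t / 3) + (x : ℕ) / t % 3 = (x : ℕ) / t := Nat.div_add_mod _ _
    have hd : digit t (x : ℕ) 0 = (x : ℕ) / t % 3 := by simp [digit]
    have hx' : (x : ℕ) = 3 * ((x : ℕ) / t / 3 * t) + (digit t (x : ℕ) 0 * t + (x : ℕ) % t) := by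
      rw [hd]
      set q := (x : ℕ) / t with hq
      calc (x : ℕ) = t * q + (x : ℕ) % t := h1.symm
        _ = t * (3 * (q / 3) + q % 3) + (x : ℕ) % t := by rw [h2]
        _ = 3 * (q / 3 * t) + (q % 3 * t + (x : ℕ) % t) := by ring
    conv_rhs => rw [hx', Nat.mul_add_mod]
  refine ⟨fun h => ?_, fun h => ?_, fun h => ?_⟩ <;> rw [hcong] at h <;>
    rw [hval, h] <;> norm_num <;> push_cast <;> omega
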